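/- arXiv:0806.1336 — 2 statements merged into one kernel-verified Lean document; each statement's English description precedes it below -/
import Mathlib

section
/- Let $\gamma(z) = \frac{az+b}{cz+d}$ with $ad-bc=1$ be an elliptic Möbius transformation whose fixed point set is $\{1, p\}$ with $p$ real. Then $|a| = 1$ if and only if $p = 0$. -/
/-- Lemma (elliptic fixed points): let `γ(z) = (a z + b)/(c z + d)` with `a d - b c = 1`
be an elliptic Möbius transformation (`tr² = (a+d)² ∈ [0,4)`) whose fixed point set is
`{1, p}` with `p` real (the fixed points are the roots of `c z² + (d - a) z - b = 0`).
Then `|a| = 1 ↔ p = 0`. -/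
theorem elliptic_abs_eq_one_iff_fixed_point_zero
    (a b c d : ℂ) (p : ℝ)
    (hdet : a * d - b * c = 1)
    (hc : c ≠ 0)
    (hne : (p : ℂ) ≠ 1)
    -- the fixed point equation `c z² + (d - a) z - b = 0` has root set `{1, p}`
    (hroots : ∀ z : ℂ, c * z ^ 2 + (d - a) * z - b = c * (z - 1) * (z - p))
    -- ellipticity: the square of the trace is a real number in `[0, 4)`
    (hell : ∃ t : ℝ, ((a + d) ^ 2 : ℂ) = (t : ℂ) ∧ 0 ≤ t ∧ t < 4) :
    ‖a‖ = 1 ↔ p = 0 := by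
  obtain ⟨t, ht, ht0, ht4⟩ := hell
  have h0 := hroots 0
  have h1 := hroots 1
  have hb : b = -(c * (p : ℂ)) := by linear_combination -h0
  have hd : d = a - c * (1 + (p : ℂ)) := by linear_combination h1 - h0
  -- key algebraic identity
  have huv : (a - c) * (a - c * (p : ℂ)) = 1 := by
    rw [hd, hb] at hdet; linear_combination hdet
  set u := a - c with hu_def
  set v := a - c * (p : ℂ) with hv_def
  have hsum : u + v = a + d := by rw [hu_def, hv_def, hd]; ring
  -- the trace is real
  have e1 : (a + d).re * (a + d).im + (a + d).im * (a + d).re = 0 := by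
    have h1' : ((a + d) ^ 2).im = 0 := by rw [ht]; simp
    rw [pow_two, Complex.mul_im] at h1'; linarith
  have e2 : (a + d).re * (a + d).re - (a + d).im * (a + d).im = t := by
    have h2' : ((a + d) ^ 2).re = t := by rw [ht]; simp
    rw [pow_two, Complex.mul_re] at h2'; linarith
  have him : (a + d).im = 0 := by
    have hxy : (a + d).re * (a + d).im = 0 := by linarith
    rcases mul_eq_zero.mp hxy with hx | hy
    · nlinarith [mul_self_nonneg (a + d).im]
    · exact hy
  have hstar_s : (starRingEnd ℂ) (a + d) = a + d := Complex.conj_eq_iff_im.mpr him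
  -- u ≠ v
  have hune : u ≠ v := by
    intro h
    have hcp : c * ((p:ℂ) - 1) = 0 := by
      rw [hu_def, hv_def] at h; linear_combination h
    rcases mul_eq_zero.mp hcp with h' | h'
    · exact hc h'
    · exact hne (by linear_combination h')
  -- star u is a root of z² - (a+d) z + 1, which factors as (z-u)(z-v)
  have hroot : ((starRingEnd ℂ) u - u) * ((starRingEnd ℂ) u - v) = 0 := by
    have h : u * u - (a + d) * u + 1 = 0 := by
      linear_combination u * hsum - huv
    have h' : (starRingEnd ℂ) u * (starRingEnd ℂ) u - (a + d) * (starRingEnd ℂ) u + 1 = 0 := by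
      have := congrArg (starRingEnd ℂ) h
      simpa [map_mul, map_add, map_sub, hstar_s] using this
    linear_combination h' - (starRingEnd ℂ) u * hsum + huv
  have hvs : (starRingEnd ℂ) u = v := by
    rcases mul_eq_zero.mp hroot with h | h
    · -- star u = u : u and v are real, trace² ≥ 4, contradiction
      exfalso
      have heq : (starRingEnd ℂ) u = u := by linear_combination h
      have hu_real : u.im = 0 := Complex.conj_eq_iff_im.mp heq
      have hv_im : v.im = 0 := by
        have hh := congrArg Complex.im hsum
        simp only [Complex.add_im] at hh
        have him' : a.im + d.im = 0 := by rw [← Complex.add_im]; exact him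
        rw [hu_real] at hh; linarith
      have huv_re : u.re * v.re = 1 := by
        have hh := congrArg Complex.re huv
        rw [Complex.mul_re, hu_real, hv_im] at hh
        simpa using hh
      have hsre : u.re + v.re = (a + d).re := by
        have hh := congrArg Complex.re hsum
        simpa [Complex.add_re] using hh
      have hre : (u.re + v.re) * (u.re + v.re) = t := by
        rw [hsre]; rw [him] at e2; linarith [e2]
      nlinarith [sq_nonneg (u.re - v.re)]
    · linear_combination h
  have hvre : v.re = u.re := by rw [← hvs]; simp
  have hvim : v.im = -u.im := by rw [← hvs]; simp
  -- |u| = 1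
  have hnorm : u.re * u.re + u.im * u.im = 1 := by
    have hm : u * (starRingEnd ℂ) u = 1 := by rw [hvs]; exact huv
    have hh := congrArg Complex.re hm
    rw [Complex.mul_re, Complex.conj_re, Complex.conj_im] at hh
    simpa using hh
  have hui : u.im ≠ 0 := by
    intro h
    exact hune (by rw [← hvs]; exact (Complex.conj_eq_iff_im.mpr h).symm)
  -- express a in terms of u
  have ha : a * ((p : ℂ) - 1) = u * (p : ℂ) - v := by
    rw [hu_def, hv_def]; ring
  have hp1 : p - 1 ≠ 0 := by
    intro h
    have : p = 1 := by linarith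
    exact hne (by rw [this]; norm_num)
  have hre_eq := congrArg Complex.re ha
  have him_eq := congrArg Complex.im ha
  simp only [Complex.mul_re, Complex.mul_im, Complex.sub_re, Complex.sub_im,
    Complex.ofReal_re, Complex.ofReal_im, Complex.one_re, Complex.one_im,
    hvre, hvim] at hre_eq him_eq
  have hare : a.re = u.re := by
    have h' : a.re * (p - 1) = u.re * (p - 1) := by
      nlinarith [hre_eq]
    exact mul_right_cancel₀ hp1 h'
  have haim : a.im * (p - 1) = u.im * (p + 1) := by nlinarith [him_eq]
  -- conclude
  have habs : ‖a‖ = 1 ↔ a.re * a.re + a.im * a.im = 1 := by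
    rw [show a.re * a.re + a.im * a.im = Complex.normSq a from rfl, ← Complex.sq_norm]
    constructor
    · intro h; rw [h]; norm_num
    · intro h; nlinarith [norm_nonneg a]
  rw [habs]
  constructor
  · intro h
    have hsq : (a.im * (p - 1)) ^ 2 = (u.im * (p + 1)) ^ 2 := by rw [haim]
    have key : u.im * u.im * p = 0 := by
      linear_combination (-(1:ℝ)/4) * hsq + ((p-1)^2/4) * h - ((p-1)^2/4) * hnorm
        - ((p-1)^2/4) * (a.re + u.re) * hare
    rcases mul_eq_zero.mp key with h' | h'
    · exact absurd (mul_self_eq_zero.mp h') hui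
    · exact h'
  · intro hp
    subst hp
    have h1' : a.im = -u.im := by
      have := haim; push_cast at this; linarith
    rw [hare, h1']
    linear_combination hnorm
end

section
/- Let $\gamma(z) = \frac{az+b}{cz+d}$ with $ad-bc=1$ be an elliptic Möbius transformation whose fixed point set is $\{1, p\}$ with $p$ real. Then $|a| < 1$ if and only if $p < 0$. -/
/-- Lemma (elliptic fixed points): let `γ(z) = (a z + b)/(c z + d)` with `a d - b c = 1`
be an elliptic Möbius transformation (`tr² = (a+d)² ∈ [0,4)`) whose fixed point set is
`{1, p}` with `p` real (the fixed points are the roots of `c z² + (d - a) z - b = 0`).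
Then `|a| < 1 ↔ p < 0`. -/
theorem elliptic_abs_lt_one_iff_fixed_point_neg
    (a b c d : ℂ) (p : ℝ)
    (hdet : a * d - b * c = 1)
    (hc : c ≠ 0)
    (hne : (p : ℂ) ≠ 1)
    -- the fixed point equation `c z² + (d - a) z - b = 0` has root set `{1, p}`
    (hroots : ∀ z : ℂ, c * z ^ 2 + (d - a) * z - b = c * (z - 1) * (z - p))
    -- ellipticity: the square of the trace is a real number in `[0, 4)`
    (hell : ∃ t : ℝ, ((a + d) ^ 2 : ℂ) = (t : ℂ) ∧ 0 ≤ t ∧ t < 4) :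
    ‖a‖ < 1 ↔ p < 0 := by
  obtain ⟨t, ht, ht0, ht4⟩ := hell
  have hp1 : p ≠ 1 := by
    intro h; exact hne (by rw [h]; norm_num)
  have hb : b = -(c * (p : ℂ)) := by
    have h0 := hroots 0
    linear_combination -h0
  have hd : d = a - c * (1 + (p : ℂ)) := by
    have h1 := hroots 1
    linear_combination h1 + hb
  -- key identity: (a+d)^2 - 4 = c^2 (1-p)^2
  have hkey : (c * (1 - (p : ℂ))) ^ 2 = ((t : ℂ)) - 4 := by
    rw [← ht]
    linear_combination (-4:ℂ) * hdet + (-4*c) * hb + (c*(1+(p:ℂ)) + a - d) * hd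
  -- a + d is real with (a+d).re ^ 2 = t
  set z := a + d with hz
  have hz2 : z.re * z.re - z.im * z.im = t ∧ z.re * z.im + z.im * z.re = 0 := by
    have := ht
    rw [pow_two, Complex.ext_iff] at this
    simpa [Complex.mul_re, Complex.mul_im] using this
  have hzim : z.im = 0 := by
    rcases mul_eq_zero.mp (by linarith [hz2.2] : z.re * z.im = 0) with h | h
    · nlinarith [hz2.1, sq_nonneg z.im]
    · exact h
  have hzre : z.re ^ 2 = t := by nlinarith [hz2.1]
  -- w = c(1-p) is purely imaginary with w.im^2 = 4 - t
  set w := c * (1 - (p : ℂ)) with hw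
  have hw2 : w.re * w.re - w.im * w.im = t - 4 ∧ w.re * w.im + w.im * w.re = 0 := by
    have := hkey
    rw [pow_two, Complex.ext_iff] at this
    simpa [Complex.mul_re, Complex.mul_im] using this
  have hwre : w.re = 0 := by
    rcases mul_eq_zero.mp (by linarith [hw2.2] : w.re * w.im = 0) with h | h
    · exact h
    · nlinarith [hw2.1, sq_nonneg w.re]
  have hwim : w.im ^ 2 = 4 - t := by nlinarith [hw2.1]
  -- relation (1-p)(2a - z) = (1+p) w
  have hrel : ((1 : ℂ) - (p : ℂ)) * (2 * a - z) = ((1 : ℂ) + (p : ℂ)) * w := by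
    rw [hz, hw]
    linear_combination (-(1:ℂ) + (p:ℂ)) * hd
  have hrelre : (1 - p) * (2 * a.re - z.re) = (1 + p) * w.re := by
    have := congrArg Complex.re hrel
    simpa [Complex.mul_re, Complex.mul_im] using this
  have hrelim : (1 - p) * (2 * a.im - z.im) = (1 + p) * w.im := by
    have := congrArg Complex.im hrel
    simpa [Complex.mul_re, Complex.mul_im] using this
  rw [hwre, mul_zero] at hrelre
  rw [hzim] at hrelim
  have hp1' : (1 : ℝ) - p ≠ 0 := by intro h; apply hp1; linarith
  have hare : 2 * a.re = z.re := by
    rcases mul_eq_zero.mp hrelre with h | h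
    · exact absurd h hp1'
    · linarith
  -- 4 a.re^2 = t
  have h1 : 4 * a.re ^ 2 = t := by rw [← hzre, ← hare]; ring
  -- (1-p)^2 * 4 a.im^2 = (1+p)^2 (4-t)
  have h2 : (1 - p) ^ 2 * (4 * a.im ^ 2) = (1 + p) ^ 2 * (4 - t) := by
    have e : ((1 - p) * (2 * a.im - 0)) ^ 2 = ((1 + p) * w.im) ^ 2 := by rw [hrelim]
    linear_combination e + (1 + p) ^ 2 * hwim
  -- reduce abs to normSq
  have habs : ‖a‖ < 1 ↔ a.re ^ 2 + a.im ^ 2 < 1 := by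
    rw [show a.re ^ 2 + a.im ^ 2 = Complex.normSq a by simp [Complex.normSq_apply]; ring,
      ← Complex.sq_norm]
    constructor
    · intro h; nlinarith [norm_nonneg a]
    · intro h; nlinarith [norm_nonneg a]
  rw [habs]
  have hsq : (0:ℝ) < (1 - p) ^ 2 := by positivity
  have key2 : 4 * (1 - p) ^ 2 * (a.re ^ 2 + a.im ^ 2) = 4 * (1 - p) ^ 2 + 4 * (4 - t) * p := by
    linear_combination (1 - p) ^ 2 * h1 + h2
  have h4t : (0:ℝ) < 4 - t := by linarith
  have hpos : (0:ℝ) < 4 * (1 - p) ^ 2 := by positivity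
  constructor
  · intro h
    by_contra hp
    push_neg at hp
    have h5 := mul_lt_mul_of_pos_left h hpos
    rw [mul_one, key2] at h5
    have h6 : (0:ℝ) ≤ (4 - t) * p := mul_nonneg h4t.le hp
    linarith
  · intro h
    have h6 : (4 - t) * p < 0 := mul_neg_of_pos_of_neg h4t h
    have h5 : 4 * (1 - p) ^ 2 * (a.re ^ 2 + a.im ^ 2) < 4 * (1 - p) ^ 2 * 1 := by
      rw [mul_one, key2]; linarith
    exact lt_of_mul_lt_mul_left (by linarith [h5]) hpos.le
end
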